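/- Let m be a positive integer and λ a rational (or real) parameter. Define the degenerate Whitney numbers of the second kind by W_{m,λ}(n,k) = (1/(m^k k!)) Σ_{j=0}^{k} C(k,j) (-1)^{k-j} (mj+1)_{n,λ}. Then for all natural numbers n and all x, (mx+1)_{n,λ} = Σ_{k=0}^{n} W_{m,λ}(n,k) m^k (x)_k, as a polynomial identity in x. -/

import Mathlib

/-- The degenerate falling factorial `(x)_{n,λ} = x(x-λ)⋯(x-(n-1)λ)`, with `(x)_{0,λ} = 1`. -/
def degFall (x lam : ℝ) (n : ℕ) : ℝ :=
  ∏ i ∈ Finset.range n, (x - (i : ℝ) * lam)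

/-- The ordinary falling factorial `(x)_k = x(x-1)⋯(x-k+1)`, with `(x)_0 = 1`. -/
def fallFact (x : ℝ) (k : ℕ) : ℝ :=
  ∏ i ∈ Finset.range k, (x - (i : ℝ))

/-- The degenerate Whitney numbers of the second kind
`W_{m,λ}(n,k) = (1/(mᵏ k!)) Σ_{j=0}^k C(k,j) (-1)^{k-j} (mj+1)_{n,λ}`. -/
noncomputable def degWhitney (m : ℕ) (lam : ℝ) (n k : ℕ) : ℝ :=
  (1 / ((m : ℝ) ^ k * (k.factorial : ℝ))) *
    ∑ j ∈ Finset.range (k + 1),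
      (k.choose j : ℝ) * (-1 : ℝ) ^ (k - j) * degFall ((m : ℝ) * (j : ℝ) + 1) lam n

lemma degFall_succ (x lam : ℝ) (n : ℕ) :
    degFall x lam (n+1) = degFall x lam n * (x - n*lam) := Finset.prod_range_succ _ _

lemma fallFact_succ (x : ℝ) (k : ℕ) :
    fallFact x (k+1) = fallFact x k * (x - k) := Finset.prod_range_succ _ _

lemma W_zero (m : ℕ) (lam : ℝ) (n : ℕ) : degWhitney m lam n 0 = degFall 1 lam n := by
  simp [degWhitney]

lemma nat_id (k j : ℕ) (h : j ≤ k) :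
    (k + 1 - j) * (k+1).choose j = (k+1) * k.choose j := by
  rw [← Nat.choose_symm (by omega : j ≤ k+1), ← Nat.choose_symm h]
  have h2 : k + 1 - j = k - j + 1 := by omega
  rw [h2, Nat.mul_comm]
  exact (Nat.add_one_mul_choose_eq k (k - j)).symm

lemma key_sum (m : ℕ) (lam : ℝ) (n k : ℕ) (f : ℕ → ℝ) :
    ∑ j ∈ Finset.range (k+2), ((k+1).choose j : ℝ) * (-1:ℝ)^(k+1-j) * (f j * ((m:ℝ)*j + 1 - n*lam))
    = (m:ℝ)*(k+1) * ∑ j ∈ Finset.range (k+1), (k.choose j : ℝ) * (-1:ℝ)^(k-j) * f j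
      + ((m:ℝ)*(k+1) + 1 - n*lam) * ∑ j ∈ Finset.range (k+2), ((k+1).choose j : ℝ) * (-1:ℝ)^(k+1-j) * f j := by
  have hext : ∑ j ∈ Finset.range (k+1), (k.choose j : ℝ) * (-1:ℝ)^(k-j) * f j
      = ∑ j ∈ Finset.range (k+2), (k.choose j : ℝ) * (-1:ℝ)^(k-j) * f j := by
    rw [Finset.sum_range_succ (n := k+1)]
    simp [Nat.choose_succ_self]
  rw [hext, Finset.mul_sum, Finset.mul_sum, ← Finset.sum_add_distrib]
  apply Finset.sum_congr rfl
  intro j hj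
  rcases Nat.lt_succ_iff_lt_or_eq.mp (Finset.mem_range.mp hj) with hjk | rfl
  · have hjk' : j ≤ k := Nat.lt_succ_iff.mp hjk
    have h1 : k + 1 - j = (k - j) + 1 := by omega
    have h2 : ((k + 1 - j : ℕ) : ℝ) * ((k+1).choose j : ℝ) = ((k:ℝ)+1) * (k.choose j : ℝ) := by
      exact_mod_cast congrArg (Nat.cast (R := ℝ)) (nat_id k j hjk')
    have h3 : ((k + 1 - j : ℕ) : ℝ) = (k:ℝ) + 1 - (j:ℝ) := by
      rw [Nat.cast_sub (by omega : j ≤ k+1)]; push_cast; ring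
    rw [h3] at h2
    rw [h1, pow_succ]
    linear_combination ((-1:ℝ)^(k-j) * f j * (m:ℝ)) * h2
  · simp [Nat.choose_succ_self]
    ring

lemma Wrec (m : ℕ) (hm : 0 < m) (lam : ℝ) (n k : ℕ) :
    degWhitney m lam (n+1) (k+1)
      = degWhitney m lam n k + ((m:ℝ)*((k:ℝ)+1) + 1 - n*lam) * degWhitney m lam n (k+1) := by
  have hmr : (m:ℝ) ≠ 0 := Nat.cast_ne_zero.mpr hm.ne'
  unfold degWhitney
  have hsum : ∑ j ∈ Finset.range (k+1+1), ((k+1).choose j : ℝ) * (-1:ℝ)^(k+1-j) * degFall ((m:ℝ)*j+1) lam (n+1)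
      = ∑ j ∈ Finset.range (k+2), ((k+1).choose j : ℝ) * (-1:ℝ)^(k+1-j) * (degFall ((m:ℝ)*j+1) lam n * ((m:ℝ)*j+1 - n*lam)) := by
    apply Finset.sum_congr rfl; intro j _; rw [degFall_succ]
  rw [hsum, key_sum m lam n k (fun j => degFall ((m:ℝ)*j+1) lam n)]
  have hfact : ((k+1).factorial : ℝ) = ((k:ℝ)+1) * (k.factorial : ℝ) := by
    rw [Nat.factorial_succ]; push_cast; ring
  have hkf : (k.factorial : ℝ) ≠ 0 := Nat.cast_ne_zero.mpr (Nat.factorial_ne_zero k)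
  rw [hfact, pow_succ]
  field_simp

lemma Wvanish (m : ℕ) (hm : 0 < m) (lam : ℝ) : ∀ n k, n < k → degWhitney m lam n k = 0 := by
  intro n
  induction n with
  | zero =>
    intro k hk
    have hsum : ∑ j ∈ Finset.range (k+1), (k.choose j : ℝ) * (-1:ℝ)^(k-j) = ((1:ℝ) + (-1))^k := by
      rw [add_pow]
      apply Finset.sum_congr rfl; intro j _; ring
    simp only [degWhitney, degFall, Finset.range_zero, Finset.prod_empty, mul_one]
    rw [hsum]
    norm_num [zero_pow hk.ne']
  | succ n ih =>
    intro k hk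
    obtain ⟨k', rfl⟩ := Nat.exists_eq_succ_of_ne_zero (by omega : k ≠ 0)
    rw [Wrec m hm lam n k', ih k' (by omega), ih (k'+1) (by omega)]
    ring

/-- `(mx+1)_{n,λ} = Σ_{k=0}^n W_{m,λ}(n,k) mᵏ (x)_k` for all real `x`. -/
theorem degFall_eq_sum_degWhitney (m : ℕ) (hm : 0 < m) (lam : ℝ) (n : ℕ) (x : ℝ) :
    degFall ((m : ℝ) * x + 1) lam n =
      ∑ k ∈ Finset.range (n + 1), degWhitney m lam n k * (m : ℝ) ^ k * fallFact x k := by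
  induction n with
  | zero => simp [degFall, degWhitney, fallFact]
  | succ n ih =>
    rw [degFall_succ, ih,
      Finset.sum_range_succ' (fun k => degWhitney m lam (n+1) k * (m:ℝ)^k * fallFact x k) (n+1)]
    have hW0 : degWhitney m lam (n+1) 0 = degWhitney m lam n 0 * (1 - n*lam) := by
      rw [W_zero, W_zero, degFall_succ]
    have hL : (∑ k ∈ Finset.range (n+1), degWhitney m lam n k * (m:ℝ)^k * fallFact x k) * ((m:ℝ)*x + 1 - n*lam)
        = ∑ k ∈ Finset.range (n+1), (degWhitney m lam n k * (m:ℝ)^(k+1) * fallFact x (k+1)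
            + degWhitney m lam n k * ((m:ℝ)*k + 1 - n*lam) * (m:ℝ)^k * fallFact x k) := by
      rw [Finset.sum_mul]
      apply Finset.sum_congr rfl; intro k _
      rw [fallFact_succ, pow_succ]; ring
    rw [hL, Finset.sum_add_distrib]
    have hRw : ∑ k ∈ Finset.range (n+1), degWhitney m lam (n+1) (k+1) * (m:ℝ)^(k+1) * fallFact x (k+1)
        = ∑ k ∈ Finset.range (n+1), degWhitney m lam n k * (m:ℝ)^(k+1) * fallFact x (k+1)
          + ∑ k ∈ Finset.range (n+1), degWhitney m lam n (k+1) * (((m:ℝ)*((k:ℝ)+1)+1-n*lam) * (m:ℝ)^(k+1) * fallFact x (k+1)) := by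
      rw [← Finset.sum_add_distrib]
      apply Finset.sum_congr rfl; intro k _
      rw [Wrec m hm lam n k]; ring
    rw [hRw]
    have hB : ∑ k ∈ Finset.range (n+1), degWhitney m lam n k * ((m:ℝ)*k+1-n*lam) * (m:ℝ)^k * fallFact x k
        = ∑ k ∈ Finset.range n, degWhitney m lam n (k+1) * (((m:ℝ)*((k:ℝ)+1)+1-n*lam) * (m:ℝ)^(k+1) * fallFact x (k+1))
          + degWhitney m lam n 0 * (1-n*lam) := by
      rw [Finset.sum_range_succ' _ n]
      congr 1
      · apply Finset.sum_congr rfl; intro k _; push_cast; ring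
      · simp [fallFact]
    have hC : ∑ k ∈ Finset.range (n+1), degWhitney m lam n (k+1) * (((m:ℝ)*((k:ℝ)+1)+1-n*lam) * (m:ℝ)^(k+1) * fallFact x (k+1))
        = ∑ k ∈ Finset.range n, degWhitney m lam n (k+1) * (((m:ℝ)*((k:ℝ)+1)+1-n*lam) * (m:ℝ)^(k+1) * fallFact x (k+1)) := by
      rw [Finset.sum_range_succ, Wvanish m hm lam n (n+1) (by omega)]
      ring
    rw [hB, hC, hW0]
    simp [fallFact]
    ring
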